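/- arXiv:2204.00474 — 6 statements merged into one kernel-verified Lean document; each statement's English description precedes it below -/
import Mathlib

section
/- The minimizer over probability density functions p of the sum of KL divergences ∑_{i=1}^N D_KL(p ∥ p_i) is the logarithmic opinion pool: p*(x) = ∏_i p_i(x)^{1/N} / ∫ ∏_i p_i(x)^{1/N} dx. -/
open MeasureTheory Real Finset

/-- Gibbs' inequality pointwise form: `a - b ≤ a * log (a / b)` for `a ≥ 0`, `b > 0`. -/
lemma mul_log_div_ge_aux {a b : ℝ} (ha : 0 ≤ a) (hb : 0 < b) :
    a - b ≤ a * Real.log (a / b) := by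
  rcases eq_or_lt_of_le ha with h | h
  · simp [← h]; linarith
  · have h1 : Real.log (b / a) ≤ b / a - 1 := Real.log_le_sub_one_of_pos (by positivity)
    have h2 : Real.log (a / b) = - Real.log (b / a) := by
      rw [← Real.log_inv]; congr 1; field_simp
    rw [h2]
    have h3 := mul_le_mul_of_nonneg_left h1 (le_of_lt h)
    have hab : a * (b / a - 1) = b - a := by field_simp
    nlinarith

/-- The minimizer over probability densities `q` of the sum of
KL divergences `∑ i, D_KL(q ∥ p i)` is the logarithmic opinion pool
`p⋆ = (∏ i, p i ^ (1/N)) / Z`. -/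
theorem logop_minimizes_sum_kl
    {α : Type*} [MeasurableSpace α] (μ : Measure α) [SigmaFinite μ]
    (N : ℕ) (hN : 0 < N) (p : Fin N → α → ℝ)
    (hp_meas : ∀ i, Measurable (p i))
    (hp_pos : ∀ i, ∀ x, 0 < p i x)
    (hp_prob : ∀ i, ∫ x, p i x ∂μ = 1)
    (g : α → ℝ) (hg : g = fun x => ∏ i, (p i x) ^ ((1 : ℝ) / N))
    (hg_int : Integrable g μ)
    (Z : ℝ) (hZ : Z = ∫ x, g x ∂μ) (hZ_pos : 0 < Z)
    (pstar : α → ℝ) (hpstar : pstar = fun x => g x / Z)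
    (hps_kl : ∀ i, Integrable (fun x => pstar x * Real.log (pstar x / p i x)) μ)
    (q : α → ℝ) (hq_meas : Measurable q) (hq_nonneg : ∀ x, 0 ≤ q x)
    (hq_prob : ∫ x, q x ∂μ = 1)
    (hq_ac : ∀ i, ∀ᵐ x ∂μ, p i x = 0 → q x = 0)
    (hq_kl : ∀ i, Integrable (fun x => q x * Real.log (q x / p i x)) μ) :
    ∑ i, ∫ x, pstar x * Real.log (pstar x / p i x) ∂μ ≤
      ∑ i, ∫ x, q x * Real.log (q x / p i x) ∂μ := by
  have hNR : (0 : ℝ) < N := by exact_mod_cast hN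
  -- positivity of g and pstar
  have hg_pos : ∀ x, 0 < g x := by
    intro x
    rw [hg]
    exact Finset.prod_pos fun i _ => Real.rpow_pos_of_pos (hp_pos i x) _
  have hps_pos : ∀ x, 0 < pstar x := by
    intro x; rw [hpstar]; exact div_pos (hg_pos x) hZ_pos
  -- log of g
  have hlogg : ∀ x, ∑ i, Real.log (p i x) = N * Real.log (g x) := by
    intro x
    rw [hg]
    rw [Real.log_prod (fun i _ => (Real.rpow_pos_of_pos (hp_pos i x) _).ne')]
    have : ∀ i ∈ Finset.univ (α := Fin N),
        Real.log (p i x ^ ((1 : ℝ) / N)) = (1 / N) * Real.log (p i x) := by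
      intro i _; rw [Real.log_rpow (hp_pos i x)]
    rw [Finset.sum_congr rfl this, ← Finset.mul_sum]
    field_simp
  -- integrability of q
  have hq_int : Integrable q μ := by
    by_contra h
    rw [integral_undef h] at hq_prob
    norm_num at hq_prob
  -- integrability and integral of pstar
  have hps_int : Integrable pstar μ := by
    rw [hpstar]; exact hg_int.div_const Z
  have hps_prob : ∫ x, pstar x ∂μ = 1 := by
    rw [hpstar]
    simp only [div_eq_mul_inv]
    rw [integral_mul_const, ← hZ]
    field_simp
  -- pointwise identity for pstar
  have hps_pt : ∀ x, ∑ i, pstar x * Real.log (pstar x / p i x)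
      = -(N * Real.log Z) * pstar x := by
    intro x
    have hcalc : ∀ i ∈ Finset.univ (α := Fin N),
        pstar x * Real.log (pstar x / p i x)
          = pstar x * (Real.log (pstar x) - Real.log (p i x)) := by
      intro i _
      rw [Real.log_div (hps_pos x).ne' (hp_pos i x).ne']
    rw [Finset.sum_congr rfl hcalc, ← Finset.mul_sum]
    rw [Finset.sum_sub_distrib, Finset.sum_const, Finset.card_univ, Fintype.card_fin,
      nsmul_eq_mul, hlogg]
    have hlps : Real.log (pstar x) = Real.log (g x) - Real.log Z := by
      rw [hpstar]; exact Real.log_div (hg_pos x).ne' hZ_pos.ne'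
    rw [hlps]; ring
  -- LHS value
  have hLHS : ∑ i, ∫ x, pstar x * Real.log (pstar x / p i x) ∂μ
      = -(N * Real.log Z) := by
    rw [← integral_finset_sum _ (fun i _ => hps_kl i)]
    have : (fun x => ∑ i, pstar x * Real.log (pstar x / p i x))
        = fun x => -(N * Real.log Z) * pstar x := funext hps_pt
    rw [this, integral_const_mul, hps_prob, mul_one]
  -- pointwise identity for q
  have hq_pt : ∀ x, ∑ i, q x * Real.log (q x / p i x)
      = N * (q x * Real.log (q x / pstar x)) - (N * Real.log Z) * q x := by
    intro x
    rcases eq_or_lt_of_le (hq_nonneg x) with h | h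
    · simp [← h]
    · have hcalc : ∀ i ∈ Finset.univ (α := Fin N),
          q x * Real.log (q x / p i x)
            = q x * (Real.log (q x) - Real.log (p i x)) := by
        intro i _
        rw [Real.log_div h.ne' (hp_pos i x).ne']
      rw [Finset.sum_congr rfl hcalc, ← Finset.mul_sum]
      rw [Finset.sum_sub_distrib, Finset.sum_const, Finset.card_univ, Fintype.card_fin,
        nsmul_eq_mul, hlogg]
      rw [Real.log_div h.ne' (hps_pos x).ne']
      have hlps : Real.log (pstar x) = Real.log (g x) - Real.log Z := by
        rw [hpstar]; exact Real.log_div (hg_pos x).ne' hZ_pos.ne'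
      rw [hlps]; ring
  -- the KL divergence of q against pstar
  set f : α → ℝ := fun x => q x * Real.log (q x / pstar x) with hf
  have hf_eq : f = fun x =>
      (1 / (N : ℝ)) * (∑ i, q x * Real.log (q x / p i x)) + Real.log Z * q x := by
    funext x
    have := hq_pt x
    rw [hf]
    field_simp
    linarith
  have hf_int : Integrable f μ := by
    rw [hf_eq]
    exact ((integrable_finset_sum _ (fun i _ => hq_kl i)).const_mul _).add
      (hq_int.const_mul _)
  have hf_nonneg : 0 ≤ ∫ x, f x ∂μ := by
    have hmono : ∫ x, (q x - pstar x) ∂μ ≤ ∫ x, f x ∂μ := by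
      apply integral_mono (hq_int.sub hps_int) hf_int
      intro x
      exact mul_log_div_ge_aux (hq_nonneg x) (hps_pos x)
    rw [integral_sub hq_int hps_int, hq_prob, hps_prob] at hmono
    linarith
  -- RHS value
  have hRHS : ∑ i, ∫ x, q x * Real.log (q x / p i x) ∂μ
      = N * ∫ x, f x ∂μ - N * Real.log Z := by
    rw [← integral_finset_sum _ (fun i _ => hq_kl i)]
    have : (fun x => ∑ i, q x * Real.log (q x / p i x))
        = fun x => N * f x - (N * Real.log Z) * q x := funext hq_pt
    rw [this, integral_sub ((hf_int.const_mul _)) (hq_int.const_mul _),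
      integral_const_mul, integral_const_mul, hq_prob, mul_one]
  rw [hLHS, hRHS]
  nlinarith
end

section
/- For any density p and finitely many densities p_1,...,p_N, the objective ∑_i D_KL(p ∥ p_i) decomposes as N·D_KL(p ∥ p*) + constant, where p* is the normalized geometric mean of the p_i; hence p* is the unique minimizer (up to almost-everywhere equality). -/
open MeasureTheory Real Finset

/-- For any density `p` and densities `p₁, …, p_N`, the objective
`∑ i, D_KL(p ∥ p i)` decomposes as `N · D_KL(p ∥ p⋆) + constant` where
`p⋆` is the normalized geometric mean of the `p i`; hence `p⋆` is the unique
minimizer up to almost-everywhere equality. -/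
theorem sum_kl_decomposition_and_unique_minimizer
    {α : Type*} [MeasurableSpace α] (μ : Measure α) [SigmaFinite μ]
    (N : ℕ) (hN : 0 < N) (p' : Fin N → α → ℝ)
    (hp'_meas : ∀ i, Measurable (p' i))
    (hp'_pos : ∀ i, ∀ x, 0 < p' i x)
    (hp'_prob : ∀ i, ∫ x, p' i x ∂μ = 1)
    (g : α → ℝ) (hg : g = fun x => ∏ i, (p' i x) ^ ((1 : ℝ) / N))
    (hg_int : Integrable g μ)
    (Z : ℝ) (hZ : Z = ∫ x, g x ∂μ) (hZ_pos : 0 < Z)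
    (pstar : α → ℝ) (hpstar : pstar = fun x => g x / Z)
    (hps_kl : ∀ i, Integrable (fun x => pstar x * Real.log (pstar x / p' i x)) μ)
    (p : α → ℝ) (hp_meas : Measurable p) (hp_nonneg : ∀ x, 0 ≤ p x)
    (hp_prob : ∫ x, p x ∂μ = 1)
    (hp_kl : ∀ i, Integrable (fun x => p x * Real.log (p x / p' i x)) μ)
    (hp_klstar : Integrable (fun x => p x * Real.log (p x / pstar x)) μ) :
    (∑ i, ∫ x, p x * Real.log (p x / p' i x) ∂μ =
        N * (∫ x, p x * Real.log (p x / pstar x) ∂μ) - N * Real.log Z) ∧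
    ((∑ i, ∫ x, p x * Real.log (p x / p' i x) ∂μ ≤
        ∑ i, ∫ x, pstar x * Real.log (pstar x / p' i x) ∂μ) →
      p =ᵐ[μ] pstar) := by
  have hNne : (N : ℝ) ≠ 0 := Nat.cast_ne_zero.mpr hN.ne'
  have hg_pos : ∀ x, 0 < g x := by
    intro x; rw [hg]
    exact Finset.prod_pos fun i _ => Real.rpow_pos_of_pos (hp'_pos i x) _
  have hps_pos : ∀ x, 0 < pstar x := by
    intro x; rw [hpstar]; exact div_pos (hg_pos x) hZ_pos
  have hps_int : Integrable pstar μ := by rw [hpstar]; exact hg_int.div_const Z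
  have hps_prob : ∫ x, pstar x ∂μ = 1 := by
    rw [hpstar]; rw [integral_div, ← hZ, div_self hZ_pos.ne']
  have hp_int : Integrable p μ := by
    by_contra h
    rw [integral_undef h] at hp_prob
    exact one_ne_zero hp_prob.symm
  -- key pointwise identity
  have ptwise : ∀ (q : α → ℝ), (∀ x, 0 ≤ q x) → ∀ x,
      ∑ i, q x * Real.log (q x / p' i x)
        = N * (q x * Real.log (q x / pstar x)) - (N * Real.log Z) * q x := by
    intro q hq x
    rcases eq_or_lt_of_le (hq x) with h0 | hqpos
    · simp [← h0]
    · have hlgs : Real.log (pstar x) = (∑ i, Real.log (p' i x)) / N - Real.log Z := by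
        rw [hpstar]
        simp only
        rw [Real.log_div (hg_pos x).ne' hZ_pos.ne', hg]
        simp only
        rw [Real.log_prod (fun i _ => (Real.rpow_pos_of_pos (hp'_pos i x) _).ne')]
        have : ∀ i : Fin N, Real.log ((p' i x) ^ ((1:ℝ)/N)) = (1/N) * Real.log (p' i x) :=
          fun i => Real.log_rpow (hp'_pos i x) _
        rw [Finset.sum_congr rfl fun i _ => this i, ← Finset.mul_sum]
        ring
      have h1 : ∀ i : Fin N, Real.log (q x / p' i x)
          = Real.log (q x) - Real.log (p' i x) :=
        fun i => Real.log_div hqpos.ne' (hp'_pos i x).ne'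
      have h2 : Real.log (q x / pstar x) = Real.log (q x) - Real.log (pstar x) :=
        Real.log_div hqpos.ne' (hps_pos x).ne'
      simp_rw [h1, h2, hlgs]
      rw [← Finset.mul_sum, Finset.sum_sub_distrib, Finset.sum_const, Finset.card_univ,
        Fintype.card_fin, nsmul_eq_mul]
      field_simp
      ring
  -- the decomposition, for a general density q
  have key : ∀ (q : α → ℝ), (∀ x, 0 ≤ q x) → Integrable q μ → (∫ x, q x ∂μ = 1) →
      (∀ i, Integrable (fun x => q x * Real.log (q x / p' i x)) μ) →
      Integrable (fun x => q x * Real.log (q x / pstar x)) μ →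
      ∑ i, ∫ x, q x * Real.log (q x / p' i x) ∂μ
        = N * (∫ x, q x * Real.log (q x / pstar x) ∂μ) - N * Real.log Z := by
    intro q hq hq_int hq_prob hq_kl hq_kls
    rw [← integral_finset_sum _ (fun i _ => hq_kl i)]
    have : (fun x => ∑ i, q x * Real.log (q x / p' i x))
        = fun x => N * (q x * Real.log (q x / pstar x)) - (N * Real.log Z) * q x :=
      funext (ptwise q hq)
    rw [this, integral_sub (hq_kls.const_mul _) (hq_int.const_mul _),
      integral_const_mul, integral_const_mul, hq_prob, mul_one]
  have part1 := key p hp_nonneg hp_int hp_prob hp_kl hp_klstar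
  refine ⟨part1, fun hle => ?_⟩
  -- decomposition for pstar; KL(pstar‖pstar) = 0
  have hself : (fun x => pstar x * Real.log (pstar x / pstar x)) = fun _ => (0:ℝ) := by
    funext x
    rw [div_self (hps_pos x).ne', Real.log_one, mul_zero]
  have key2 := key pstar (fun x => (hps_pos x).le) hps_int hps_prob hps_kl
    (by rw [hself]; exact integrable_zero _ _ _)
  rw [hself] at key2
  simp only [integral_zero, mul_zero, zero_sub] at key2
  rw [part1, key2] at hle
  have hKL_le : ∫ x, p x * Real.log (p x / pstar x) ∂μ ≤ 0 := by
    nlinarith [hle, (Nat.cast_pos (α := ℝ)).mpr hN]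
  -- Gibbs' inequality with equality case
  set F : α → ℝ := fun x => p x * Real.log (p x / pstar x) - p x + pstar x with hF
  have hFcase : ∀ x, (p x = pstar x ∧ F x = 0) ∨ 0 < F x := by
    intro x
    rcases eq_or_lt_of_le (hp_nonneg x) with h0 | hpx
    · right; simp [hF, ← h0, hps_pos x]
    · by_cases heq : p x = pstar x
      · left
        refine ⟨heq, ?_⟩
        simp [hF, heq, div_self (hps_pos x).ne']
      · right
        have ht : 0 < pstar x / p x := div_pos (hps_pos x) hpx
        have ht1 : pstar x / p x ≠ 1 := by
          intro h
          exact heq ((div_eq_one_iff_eq hpx.ne').mp h).symm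
        have hlt := Real.log_lt_sub_one_of_pos ht ht1
        have hrw : Real.log (p x / pstar x) = -Real.log (pstar x / p x) := by
          rw [← Real.log_inv, inv_div]
        have : p x * Real.log (pstar x / p x) < p x * (pstar x / p x - 1) :=
          (mul_lt_mul_iff_right₀ hpx).mpr hlt
        rw [mul_sub, mul_div_cancel₀ _ hpx.ne'] at this
        simp only [hF, hrw]
        nlinarith
  have hF_nonneg : ∀ x, 0 ≤ F x := by
    intro x
    rcases hFcase x with ⟨_, h⟩ | h
    · exact h.ge
    · exact h.le
  have hF_int : Integrable F μ := (hp_klstar.sub hp_int).add hps_int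
  have hA : Integrable (fun x => p x * Real.log (p x / pstar x) - p x) μ :=
    hp_klstar.sub hp_int
  have hF_integral : ∫ x, F x ∂μ = ∫ x, p x * Real.log (p x / pstar x) ∂μ := by
    simp only [hF]
    rw [integral_add hA hps_int, integral_sub hp_klstar hp_int, hp_prob, hps_prob]
    ring
  have hF0 : ∫ x, F x ∂μ = 0 :=
    le_antisymm (hF_integral ▸ hKL_le) (integral_nonneg hF_nonneg)
  have hFae : F =ᵐ[μ] 0 := (integral_eq_zero_iff_of_nonneg hF_nonneg hF_int).mp hF0
  filter_upwards [hFae] with x hx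
  rcases hFcase x with ⟨h, _⟩ | h
  · exact h
  · exact absurd hx h.ne'
end

section
/- Covariance intersection is consistent: if estimates (x_i, P_i) satisfy E[(x - x_i)(x - x_i)^T] ⪯ P_i for i = 1,...,m, and weights w_i ≥ 0 sum to 1 with fused inverse covariance P̄^{-1} = ∑_i w_i P_i^{-1} and fused mean x̄ = P̄ ∑_i w_i P_i^{-1} x_i, then E[(x - x̄)(x - x̄)^T] ⪯ P̄. -/
open MeasureTheory Matrix Finset

section Helpers

variable {n : ℕ}

private lemma mySum_mulVec {ι : Type*} (s : Finset ι) (M : ι → Matrix (Fin n) (Fin n) ℝ)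
    (v : Fin n → ℝ) : (∑ i ∈ s, M i) *ᵥ v = ∑ i ∈ s, M i *ᵥ v := by
  classical
  induction s using Finset.induction with
  | empty => simp
  | insert a s h ih =>
    rw [Finset.sum_insert h, Finset.sum_insert h, Matrix.add_mulVec, ih]

private lemma myDot_sum (v : Fin n → ℝ) {ι : Type*} (s : Finset ι) (f : ι → Fin n → ℝ) :
    v ⬝ᵥ (∑ i ∈ s, f i) = ∑ i ∈ s, v ⬝ᵥ f i := by
  simp only [dotProduct, Finset.sum_apply, Finset.mul_sum]
  exact Finset.sum_comm

private lemma sq_dot_expand (z e : Fin n → ℝ) :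
    (z ⬝ᵥ e)^2 = ∑ k, ∑ l, (z k * z l) * (e k * e l) := by
  simp only [dotProduct, sq, Finset.sum_mul_sum]
  exact Finset.sum_congr rfl fun k _ => Finset.sum_congr rfl fun l _ => by ring

private lemma integrable_sq_dot {Ω : Type*} [MeasureSpace Ω] (e : Ω → Fin n → ℝ)
    (hint : ∀ k l, Integrable fun ω => e ω k * e ω l) (z : Fin n → ℝ) :
    Integrable fun ω => (z ⬝ᵥ e ω)^2 := by
  have h : (fun ω => (z ⬝ᵥ e ω)^2) = fun ω => ∑ k, ∑ l, (z k * z l) * (e ω k * e ω l) :=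
    funext fun ω => sq_dot_expand z (e ω)
  rw [h]
  exact integrable_finset_sum _ fun k _ => integrable_finset_sum _ fun l _ =>
    (hint k l).const_mul _

private lemma dot_cov {Ω : Type*} [MeasureSpace Ω] (e : Ω → Fin n → ℝ)
    (hint : ∀ k l, Integrable fun ω => e ω k * e ω l) (z : Fin n → ℝ) :
    z ⬝ᵥ (Matrix.of fun k l => ∫ ω, e ω k * e ω l) *ᵥ z = ∫ ω, (z ⬝ᵥ e ω)^2 := by
  have h1 : ∫ ω, (z ⬝ᵥ e ω)^2 = ∑ k, ∑ l, (z k * z l) * ∫ ω, e ω k * e ω l := by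
    simp_rw [sq_dot_expand]
    rw [integral_finset_sum _ (fun k _ => integrable_finset_sum _ fun l _ =>
      (hint k l).const_mul _)]
    refine Finset.sum_congr rfl fun k _ => ?_
    rw [integral_finset_sum _ (fun l _ => (hint k l).const_mul _)]
    exact Finset.sum_congr rfl fun l _ => MeasureTheory.integral_const_mul _ _
  rw [h1]
  simp only [dotProduct, Matrix.mulVec, Matrix.of_apply, Finset.mul_sum]
  exact Finset.sum_congr rfl fun k _ => Finset.sum_congr rfl fun l _ => by ring

private lemma jensen_sq {ι : Type*} (s : Finset ι) (w a : ι → ℝ) (hw : ∀ i ∈ s, 0 ≤ w i)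
    (hs : ∑ i ∈ s, w i = 1) : (∑ i ∈ s, w i * a i)^2 ≤ ∑ i ∈ s, w i * a i^2 := by
  have key := Finset.sum_mul_sq_le_sq_mul_sq s (fun i => Real.sqrt (w i))
    (fun i => Real.sqrt (w i) * a i)
  have h1 : ∀ i ∈ s, Real.sqrt (w i) * (Real.sqrt (w i) * a i) = w i * a i := fun i hi => by
    rw [← mul_assoc, Real.mul_self_sqrt (hw i hi)]
  have h2 : ∀ i ∈ s, (Real.sqrt (w i))^2 = w i := fun i hi => Real.sq_sqrt (hw i hi)
  have h3 : ∀ i ∈ s, (Real.sqrt (w i) * a i)^2 = w i * a i^2 := fun i hi => by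
    rw [mul_pow, Real.sq_sqrt (hw i hi)]
  rw [Finset.sum_congr rfl h1, Finset.sum_congr rfl h2, Finset.sum_congr rfl h3, hs,
    one_mul] at key
  exact key

private lemma conj_quad (Bm M : Matrix (Fin n) (Fin n) ℝ) (v : Fin n → ℝ) :
    (Bmᵀ *ᵥ v) ⬝ᵥ M *ᵥ (Bmᵀ *ᵥ v) = v ⬝ᵥ (Bm * M * Bmᵀ) *ᵥ v := by
  rw [Matrix.mul_assoc, ← Matrix.mulVec_mulVec, ← Matrix.mulVec_mulVec,
    Matrix.dotProduct_mulVec v Bm, ← Matrix.mulVec_transpose]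

end Helpers

/-- Covariance intersection is consistent: if each estimate `(xᵢ, Pᵢ)`
satisfies `E[(x - xᵢ)(x - xᵢ)ᵀ] ⪯ Pᵢ`, weights `wᵢ ≥ 0` sum to 1, and the fused
estimate has inverse covariance `P̄⁻¹ = ∑ wᵢ Pᵢ⁻¹` and mean
`x̄ = P̄ ∑ wᵢ Pᵢ⁻¹ xᵢ`, then `E[(x - x̄)(x - x̄)ᵀ] ⪯ P̄`. -/
theorem covariance_intersection_consistent
    {Ω : Type*} [MeasureSpace Ω] [IsProbabilityMeasure (volume : Measure Ω)]
    {n m : ℕ} (x : Ω → Fin n → ℝ) (xe : Fin m → Ω → Fin n → ℝ)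
    (P : Fin m → Matrix (Fin n) (Fin n) ℝ) (hP : ∀ i, (P i).PosDef)
    (w : Fin m → ℝ) (hw_nonneg : ∀ i, 0 ≤ w i) (hw_sum : ∑ i, w i = 1)
    (hint : ∀ i, ∀ k l, Integrable fun ω => (x ω k - xe i ω k) * (x ω l - xe i ω l))
    (hcons : ∀ i,
      (P i - Matrix.of fun k l => ∫ ω, (x ω k - xe i ω k) * (x ω l - xe i ω l)).PosSemidef)
    (Pbar : Matrix (Fin n) (Fin n) ℝ) (hPbar : Pbar = (∑ i, w i • (P i)⁻¹)⁻¹)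
    (xbar : Ω → Fin n → ℝ)
    (hxbar : ∀ ω, xbar ω = Pbar *ᵥ ∑ i, w i • ((P i)⁻¹ *ᵥ xe i ω))
    (hint' : ∀ k l, Integrable fun ω => (x ω k - xbar ω k) * (x ω l - xbar ω l)) :
    (Pbar - Matrix.of fun k l => ∫ ω, (x ω k - xbar ω k) * (x ω l - xbar ω l)).PosSemidef := by
  have hstar : ∀ (v : Fin n → ℝ), star v = v := fun v => funext fun k => rfl
  set S : Matrix (Fin n) (Fin n) ℝ := ∑ i, w i • (P i)⁻¹ with hSdef
  -- S is Hermitian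
  have hSherm : S.IsHermitian := by
    show Sᴴ = S
    rw [hSdef, Matrix.conjTranspose_sum]
    refine Finset.sum_congr rfl fun i _ => ?_
    rw [Matrix.conjTranspose_smul, (hP i).inv.isHermitian.eq]
    simp
  -- S is positive definite
  have hSpd : S.PosDef := by
    refine posDef_iff_dotProduct_mulVec.mpr ⟨hSherm, fun z hz => ?_⟩
    have hj : ∃ j, 0 < w j := by
      by_contra h
      push_neg at h
      have h0 : ∀ i ∈ Finset.univ, w i = (0 : ℝ) :=
        fun i _ => le_antisymm (h i) (hw_nonneg i)
      rw [Finset.sum_congr rfl h0] at hw_sum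
      simp at hw_sum
    obtain ⟨j, hj⟩ := hj
    have hexp : star z ⬝ᵥ S *ᵥ z = ∑ i, w i * (star z ⬝ᵥ (P i)⁻¹ *ᵥ z) := by
      rw [hSdef, mySum_mulVec, myDot_sum]
      exact Finset.sum_congr rfl fun i _ => by
        rw [Matrix.smul_mulVec, dotProduct_smul, smul_eq_mul]
    rw [hexp]
    exact Finset.sum_pos' (fun i _ => mul_nonneg (hw_nonneg i) ((hP i).inv.posSemidef.dotProduct_mulVec_nonneg z))
      ⟨j, Finset.mem_univ j, mul_pos hj ((hP j).inv.dotProduct_mulVec_pos hz)⟩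
  have hPbarpd : Pbar.PosDef := by rw [hPbar]; exact hSpd.inv
  have hPbarHerm : Pbar.IsHermitian := hPbarpd.isHermitian
  have hPbarS : Pbar * S = 1 := by
    rw [hPbar]
    exact Matrix.nonsing_inv_mul S (isUnit_iff_ne_zero.mpr hSpd.det_pos.ne')
  have hPinvP : ∀ i, (P i)⁻¹ * P i = 1 := fun i =>
    Matrix.nonsing_inv_mul (P i) (isUnit_iff_ne_zero.mpr (hP i).det_pos.ne')
  -- key identity for the fused error
  have hkey : ∀ ω, x ω - xbar ω = Pbar *ᵥ (∑ i, w i • ((P i)⁻¹ *ᵥ (x ω - xe i ω))) := by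
    intro ω
    have h1 : ∑ i, w i • ((P i)⁻¹ *ᵥ (x ω - xe i ω))
        = S *ᵥ x ω - ∑ i, w i • ((P i)⁻¹ *ᵥ xe i ω) := by
      rw [hSdef, mySum_mulVec, ← Finset.sum_sub_distrib]
      refine Finset.sum_congr rfl fun i _ => ?_
      rw [Matrix.mulVec_sub, smul_sub, Matrix.smul_mulVec]
    rw [hxbar ω, h1, Matrix.mulVec_sub, Matrix.mulVec_mulVec, hPbarS, Matrix.one_mulVec]
  refine posSemidef_iff_dotProduct_mulVec.mpr ⟨?_, ?_⟩
  · -- Hermitian part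
    refine Matrix.IsHermitian.sub hPbarHerm ?_
    show _ = _
    ext k l
    simp only [Matrix.conjTranspose_apply, Matrix.of_apply, star_trivial]
    exact integral_congr_ae (Filter.Eventually.of_forall fun ω => mul_comm _ _)
  -- positivity part
  intro z
  rw [hstar, Matrix.sub_mulVec, dotProduct_sub, sub_nonneg]
  set zv : Fin m → Fin n → ℝ := fun i => (Pbar * (P i)⁻¹)ᵀ *ᵥ z with hzv
  -- decompose the fused error along individual errors
  have ha : ∀ ω, z ⬝ᵥ (x ω - xbar ω) = ∑ i, w i * (zv i ⬝ᵥ (x ω - xe i ω)) := by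
    intro ω
    rw [hkey ω, Matrix.dotProduct_mulVec, myDot_sum]
    refine Finset.sum_congr rfl fun i _ => ?_
    rw [dotProduct_smul, smul_eq_mul, Matrix.dotProduct_mulVec]
    have hv : zv i = z ᵥ* Pbar ᵥ* (P i)⁻¹ := by
      show (Pbar * (P i)⁻¹)ᵀ *ᵥ z = _
      rw [Matrix.mulVec_transpose, ← Matrix.vecMul_vecMul]
    rw [hv]
  have hCq : z ⬝ᵥ (Matrix.of fun k l =>
      ∫ ω, (x ω k - xbar ω k) * (x ω l - xbar ω l)) *ᵥ z
      = ∫ ω, (z ⬝ᵥ (x ω - xbar ω))^2 := dot_cov (fun ω => x ω - xbar ω) hint' z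
  have hInt1 : Integrable fun ω => (z ⬝ᵥ (x ω - xbar ω))^2 :=
    integrable_sq_dot _ hint' z
  have hIntai : ∀ i, Integrable fun ω => (zv i ⬝ᵥ (x ω - xe i ω))^2 := fun i =>
    integrable_sq_dot _ (hint i) (zv i)
  have hstep : ∀ i, ∫ ω, (zv i ⬝ᵥ (x ω - xe i ω))^2 ≤ zv i ⬝ᵥ P i *ᵥ zv i := by
    intro i
    have h0 := (hcons i).dotProduct_mulVec_nonneg (zv i)
    rw [hstar, Matrix.sub_mulVec, dotProduct_sub, sub_nonneg] at h0
    calc ∫ ω, (zv i ⬝ᵥ (x ω - xe i ω))^2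
        = zv i ⬝ᵥ (Matrix.of fun k l =>
            ∫ ω, (x ω k - xe i ω k) * (x ω l - xe i ω l)) *ᵥ zv i :=
          (dot_cov (fun ω => x ω - xe i ω) (hint i) (zv i)).symm
      _ ≤ zv i ⬝ᵥ P i *ᵥ zv i := h0
  have hmain : z ⬝ᵥ (Matrix.of fun k l =>
      ∫ ω, (x ω k - xbar ω k) * (x ω l - xbar ω l)) *ᵥ z
      ≤ ∑ i, w i * (zv i ⬝ᵥ P i *ᵥ zv i) := by
    rw [hCq]
    calc ∫ ω, (z ⬝ᵥ (x ω - xbar ω))^2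
        ≤ ∫ ω, ∑ i, w i * (zv i ⬝ᵥ (x ω - xe i ω))^2 := by
          refine integral_mono hInt1
            (integrable_finset_sum _ fun i _ => (hIntai i).const_mul _) ?_
          intro ω
          dsimp only
          rw [ha ω]
          exact jensen_sq Finset.univ w _ (fun i _ => hw_nonneg i) hw_sum
      _ = ∑ i, w i * ∫ ω, (zv i ⬝ᵥ (x ω - xe i ω))^2 := by
          rw [integral_finset_sum _ fun i _ => (hIntai i).const_mul _]
          exact Finset.sum_congr rfl fun i _ => MeasureTheory.integral_const_mul _ _
      _ ≤ ∑ i, w i * (zv i ⬝ᵥ P i *ᵥ zv i) :=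
          Finset.sum_le_sum fun i _ => mul_le_mul_of_nonneg_left (hstep i) (hw_nonneg i)
  refine le_trans hmain (le_of_eq ?_)
  -- final algebra: ∑ w i * (zv i ⬝ᵥ P i *ᵥ zv i) = z ⬝ᵥ Pbar *ᵥ z
  have hterm : ∀ i, zv i ⬝ᵥ P i *ᵥ zv i = z ⬝ᵥ (Pbar * ((P i)⁻¹ * Pbar)) *ᵥ z := by
    intro i
    rw [hzv]
    show ((Pbar * (P i)⁻¹)ᵀ *ᵥ z) ⬝ᵥ P i *ᵥ ((Pbar * (P i)⁻¹)ᵀ *ᵥ z) = _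
    rw [conj_quad]
    have hM : Pbar * (P i)⁻¹ * P i * (Pbar * (P i)⁻¹)ᵀ = Pbar * ((P i)⁻¹ * Pbar) := by
      rw [Matrix.transpose_mul,
        show ((P i)⁻¹)ᵀ = (P i)⁻¹ from (hP i).inv.isHermitian,
        show Pbarᵀ = Pbar from hPbarHerm,
        Matrix.mul_assoc Pbar ((P i)⁻¹) (P i), hPinvP i, Matrix.mul_one]
    rw [hM]
  have hsum2 : ∑ i, w i • (Pbar * ((P i)⁻¹ * Pbar)) = Pbar := by
    calc ∑ i, w i • (Pbar * ((P i)⁻¹ * Pbar))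
        = Pbar * ∑ i, w i • ((P i)⁻¹ * Pbar) := by
          rw [Finset.mul_sum]
          exact Finset.sum_congr rfl fun i _ => (mul_smul_comm _ _ _).symm
      _ = Pbar * ((∑ i, w i • (P i)⁻¹) * Pbar) := by
          rw [Finset.sum_mul]
          congr 1
          exact Finset.sum_congr rfl fun i _ => (smul_mul_assoc _ _ _).symm
      _ = Pbar := by rw [← hSdef, ← Matrix.mul_assoc, hPbarS, Matrix.one_mul]
  calc ∑ i, w i * (zv i ⬝ᵥ P i *ᵥ zv i)
      = ∑ i, w i * (z ⬝ᵥ (Pbar * ((P i)⁻¹ * Pbar)) *ᵥ z) :=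
        Finset.sum_congr rfl fun i _ => by rw [hterm i]
    _ = z ⬝ᵥ (∑ i, w i • (Pbar * ((P i)⁻¹ * Pbar))) *ᵥ z := by
        rw [mySum_mulVec, myDot_sum]
        exact (Finset.sum_congr rfl fun i _ => by
          rw [Matrix.smul_mulVec, dotProduct_smul, smul_eq_mul]).symm
    _ = z ⬝ᵥ Pbar *ᵥ z := by rw [hsum2]
end

section
/- For positive definite matrices, the weighted harmonic-mean consistency inequality holds: if w_i ≥ 0 sum to 1, P_i ≻ 0, and vectors e_i satisfy the fused error e = P̄ ∑_i w_i P_i^{-1} e_i with P̄ = (∑_i w_i P_i^{-1})^{-1}, then e e^T ⪯ P̄ (∑_i w_i P_i^{-1} e_i e_i^T P_i^{-1}) P̄ ⪯ P̄ · max_i (e_i^T P_i^{-1} e_i) in an appropriate sense; in particular (∑_i w_i P_i^{-1} e_i)^T P̄ (∑_i w_i P_i^{-1} e_i) ≤ ∑_i w_i e_i^T P_i^{-1} e_i. -/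
open Matrix Finset

private lemma vmv_mulVec {n : ℕ} (a b x : Fin n → ℝ) :
    vecMulVec a b *ᵥ x = (b ⬝ᵥ x) • a := by
  ext i
  simp [vecMulVec_apply, mulVec, dotProduct, Finset.mul_sum, mul_comm, mul_left_comm]

private lemma dot_symm {n : ℕ} (A : Matrix (Fin n) (Fin n) ℝ) (hA : Aᵀ = A)
    (u v : Fin n → ℝ) : u ⬝ᵥ A *ᵥ v = v ⬝ᵥ A *ᵥ u := by
  rw [dotProduct_mulVec, dotProduct_comm, ← mulVec_transpose, hA]

private lemma sum_mulVec' {m n : ℕ} (A : Fin m → Matrix (Fin n) (Fin n) ℝ) (x : Fin n → ℝ) :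
    (∑ i, A i) *ᵥ x = ∑ i, A i *ᵥ x := by
  ext j
  simp only [Finset.sum_apply, Matrix.sum_apply, mulVec, dotProduct, Finset.sum_mul]
  rw [Finset.sum_comm]

private lemma dotProduct_sum' {m n : ℕ} (v : Fin n → ℝ) (u : Fin m → Fin n → ℝ) :
    v ⬝ᵥ (∑ i, u i) = ∑ i, v ⬝ᵥ u i := by
  simp only [dotProduct, Finset.sum_apply, Finset.mul_sum]
  rw [Finset.sum_comm]

private lemma vmv_symm {n : ℕ} (a : Fin n → ℝ) : (vecMulVec a a)ᵀ = vecMulVec a a := by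
  ext i j
  simp [vecMulVec_apply, transpose_apply, mul_comm]

private lemma herm_of_transpose {n : ℕ} (A : Matrix (Fin n) (Fin n) ℝ) (hA : Aᵀ = A) :
    A.IsHermitian := by
  rw [Matrix.IsHermitian, conjTranspose_eq_transpose_of_trivial, hA]

/-- Weighted harmonic-mean consistency inequality for positive definite
matrices. With `P̄ = (∑ wᵢ Pᵢ⁻¹)⁻¹` and fused error `e = P̄ ∑ wᵢ Pᵢ⁻¹ eᵢ`, one has
`e eᵀ ⪯ P̄ (∑ wᵢ Pᵢ⁻¹ eᵢ eᵢᵀ Pᵢ⁻¹) P̄`, and in particular the Jensen-type inequality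
`(∑ wᵢ Pᵢ⁻¹ eᵢ)ᵀ P̄ (∑ wᵢ Pᵢ⁻¹ eᵢ) ≤ ∑ wᵢ eᵢᵀ Pᵢ⁻¹ eᵢ`. -/
theorem harmonic_mean_consistency {n m : ℕ}
    (e : Fin m → Fin n → ℝ) (P : Fin m → Matrix (Fin n) (Fin n) ℝ)
    (hP : ∀ i, (P i).PosDef)
    (w : Fin m → ℝ) (hw_nonneg : ∀ i, 0 ≤ w i) (hw_sum : ∑ i, w i = 1)
    (Pbar : Matrix (Fin n) (Fin n) ℝ) (hPbar : Pbar = (∑ i, w i • (P i)⁻¹)⁻¹)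
    (s : Fin n → ℝ) (hs : s = ∑ i, w i • ((P i)⁻¹ *ᵥ e i))
    (ebar : Fin n → ℝ) (hebar : ebar = Pbar *ᵥ s) :
    (Pbar * (∑ i, w i • ((P i)⁻¹ * vecMulVec (e i) (e i) * (P i)⁻¹)) * Pbar -
        vecMulVec ebar ebar).PosSemidef ∧
      s ⬝ᵥ Pbar *ᵥ s ≤ ∑ i, w i * (e i ⬝ᵥ (P i)⁻¹ *ᵥ e i) := by
  have hQ : ∀ i, ((P i)⁻¹).PosDef := fun i => (hP i).inv
  have hQsym : ∀ i, ((P i)⁻¹)ᵀ = (P i)⁻¹ := fun i => by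
    have h := (hQ i).isHermitian
    rwa [Matrix.IsHermitian, conjTranspose_eq_transpose_of_trivial] at h
  set S : Matrix (Fin n) (Fin n) ℝ := ∑ i, w i • (P i)⁻¹ with hSdef
  have hSsym : Sᵀ = S := by
    rw [hSdef, transpose_sum]
    exact Finset.sum_congr rfl fun i _ => by rw [transpose_smul, hQsym]
  have hSpd : S.PosDef := by
    refine posDef_iff_dotProduct_mulVec.mpr ⟨herm_of_transpose S hSsym, fun x hx => ?_⟩
    have hx0 : ∃ i, 0 < w i := by
      by_contra h
      push_neg at h
      rw [Finset.sum_eq_zero fun i _ => le_antisymm (h i) (hw_nonneg i)] at hw_sum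
      norm_num at hw_sum
    obtain ⟨i0, hi0⟩ := hx0
    have hxS : star x ⬝ᵥ S *ᵥ x = ∑ i, w i * (x ⬝ᵥ (P i)⁻¹ *ᵥ x) := by
      rw [star_trivial, hSdef, sum_mulVec', dotProduct_sum']
      exact Finset.sum_congr rfl fun i _ => by
        rw [Matrix.smul_mulVec, dotProduct_smul, smul_eq_mul]
    rw [hxS]
    have hterm : ∀ i ∈ Finset.univ, 0 ≤ w i * (x ⬝ᵥ (P i)⁻¹ *ᵥ x) := fun i _ =>
      mul_nonneg (hw_nonneg i) (by simpa using (hQ i).posSemidef.dotProduct_mulVec_nonneg x)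
    have h0 : w i0 * (x ⬝ᵥ (P i0)⁻¹ *ᵥ x) ≤ ∑ i, w i * (x ⬝ᵥ (P i)⁻¹ *ᵥ x) :=
      Finset.single_le_sum hterm (Finset.mem_univ i0)
    have hpos : 0 < w i0 * (x ⬝ᵥ (P i0)⁻¹ *ᵥ x) :=
      mul_pos hi0 (by simpa using (hQ i0).dotProduct_mulVec_pos hx)
    linarith
  have hPbarPD : Pbar.PosDef := hPbar ▸ hSpd.inv
  have hPbarSym : Pbarᵀ = Pbar := by
    have h := hPbarPD.isHermitian
    rwa [Matrix.IsHermitian, conjTranspose_eq_transpose_of_trivial] at h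
  have hSP : S * Pbar = 1 := hPbar ▸ Matrix.mul_nonsing_inv S hSpd.det_pos.ne'.isUnit
  -- dot product with s expansion
  have hdots : ∀ z : Fin n → ℝ, z ⬝ᵥ s = ∑ i, w i * (z ⬝ᵥ (P i)⁻¹ *ᵥ e i) := by
    intro z
    rw [hs, dotProduct_sum']
    exact Finset.sum_congr rfl fun i _ => by rw [dotProduct_smul, smul_eq_mul]
  -- quadratic form of the middle matrix
  have keyM : ∀ z : Fin n → ℝ,
      z ⬝ᵥ (∑ i, w i • ((P i)⁻¹ * vecMulVec (e i) (e i) * (P i)⁻¹)) *ᵥ z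
        = ∑ i, w i * (z ⬝ᵥ (P i)⁻¹ *ᵥ e i) ^ 2 := by
    intro z
    rw [sum_mulVec', dotProduct_sum']
    refine Finset.sum_congr rfl fun i _ => ?_
    rw [Matrix.smul_mulVec, dotProduct_smul, smul_eq_mul]
    congr 1
    rw [← Matrix.mulVec_mulVec, ← Matrix.mulVec_mulVec, vmv_mulVec, Matrix.mulVec_smul,
      dotProduct_smul, smul_eq_mul, dot_symm _ (hQsym i) (e i) z, sq]
  -- the quadratic-form Jensen inequality, for every z
  have keyCS : ∀ z : Fin n → ℝ,
      (∑ i, w i * (z ⬝ᵥ (P i)⁻¹ *ᵥ e i)) ^ 2 ≤ ∑ i, w i * (z ⬝ᵥ (P i)⁻¹ *ᵥ e i) ^ 2 := by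
    intro z
    have := Finset.sum_sq_le_sum_mul_sum_of_sq_eq_mul Finset.univ
      (r := fun i => w i * (z ⬝ᵥ (P i)⁻¹ *ᵥ e i)) (f := fun i => w i)
      (g := fun i => w i * (z ⬝ᵥ (P i)⁻¹ *ᵥ e i) ^ 2)
      (fun i _ => hw_nonneg i)
      (fun i _ => mul_nonneg (hw_nonneg i) (sq_nonneg _))
      (fun i _ => by ring)
    rwa [hw_sum, one_mul] at this
  constructor
  · -- PSD part
    refine posSemidef_iff_dotProduct_mulVec.mpr ⟨?_, ?_⟩
    · -- Hermitian
      refine herm_of_transpose _ ?_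
      rw [transpose_sub, transpose_mul, transpose_mul, hPbarSym]
      have hMsym : (∑ i, w i • ((P i)⁻¹ * vecMulVec (e i) (e i) * (P i)⁻¹))ᵀ
          = ∑ i, w i • ((P i)⁻¹ * vecMulVec (e i) (e i) * (P i)⁻¹) := by
        rw [transpose_sum]
        refine Finset.sum_congr rfl fun i _ => ?_
        rw [transpose_smul, transpose_mul, transpose_mul, hQsym, vmv_symm,
          Matrix.mul_assoc]
      rw [hMsym, vmv_symm, ← Matrix.mul_assoc]
    · -- quadratic form nonneg
      intro x
      rw [star_trivial, Matrix.sub_mulVec, dotProduct_sub, sub_nonneg]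
      have h1 : x ⬝ᵥ (Pbar * (∑ i, w i • ((P i)⁻¹ * vecMulVec (e i) (e i) * (P i)⁻¹)) * Pbar) *ᵥ x
          = ∑ i, w i * ((Pbar *ᵥ x) ⬝ᵥ (P i)⁻¹ *ᵥ e i) ^ 2 := by
        rw [← Matrix.mulVec_mulVec, ← Matrix.mulVec_mulVec, dotProduct_mulVec,
          ← mulVec_transpose, hPbarSym]
        exact keyM (Pbar *ᵥ x)
      have h2 : x ⬝ᵥ vecMulVec ebar ebar *ᵥ x
          = (∑ i, w i * ((Pbar *ᵥ x) ⬝ᵥ (P i)⁻¹ *ᵥ e i)) ^ 2 := by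
        rw [vmv_mulVec, dotProduct_smul, smul_eq_mul, dotProduct_comm ebar x, ← sq, hebar]
        congr 1
        rw [dotProduct_mulVec, ← mulVec_transpose, hPbarSym]
        exact hdots (Pbar *ᵥ x)
      rw [h1, h2]
      exact keyCS (Pbar *ᵥ x)
  · -- Jensen scalar inequality, via completion of squares
    set y : Fin n → ℝ := Pbar *ᵥ s with hy
    have hSy : S *ᵥ y = s := by
      rw [hy, Matrix.mulVec_mulVec, hSP, Matrix.one_mulVec]
    have hySy : y ⬝ᵥ S *ᵥ y = s ⬝ᵥ Pbar *ᵥ s := by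
      rw [hSy, hy, dotProduct_comm]
    have hys : y ⬝ᵥ s = s ⬝ᵥ Pbar *ᵥ s := by rw [hy, dotProduct_comm]
    have hexp : ∑ i, w i * ((e i - y) ⬝ᵥ (P i)⁻¹ *ᵥ (e i - y))
        = ∑ i, w i * (e i ⬝ᵥ (P i)⁻¹ *ᵥ e i) - 2 * (y ⬝ᵥ s) + y ⬝ᵥ S *ᵥ y := by
      have hterm : ∀ i, w i * ((e i - y) ⬝ᵥ (P i)⁻¹ *ᵥ (e i - y))
          = w i * (e i ⬝ᵥ (P i)⁻¹ *ᵥ e i) - 2 * (w i * (y ⬝ᵥ (P i)⁻¹ *ᵥ e i))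
            + w i * (y ⬝ᵥ (P i)⁻¹ *ᵥ y) := by
        intro i
        have : (e i - y) ⬝ᵥ (P i)⁻¹ *ᵥ (e i - y)
            = e i ⬝ᵥ (P i)⁻¹ *ᵥ e i - 2 * (y ⬝ᵥ (P i)⁻¹ *ᵥ e i) + y ⬝ᵥ (P i)⁻¹ *ᵥ y := by
          rw [Matrix.mulVec_sub, dotProduct_sub, sub_dotProduct, sub_dotProduct,
            dot_symm _ (hQsym i) (e i) y]
          ring
        rw [this]; ring
      rw [Finset.sum_congr rfl fun i _ => hterm i, Finset.sum_add_distrib, Finset.sum_sub_distrib,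
        ← Finset.mul_sum, ← hdots y]
      congr 1
      rw [hSdef, sum_mulVec', dotProduct_sum']
      exact Finset.sum_congr rfl fun i _ => by
        rw [Matrix.smul_mulVec, dotProduct_smul, smul_eq_mul]
    have hnn : 0 ≤ ∑ i, w i * ((e i - y) ⬝ᵥ (P i)⁻¹ *ᵥ (e i - y)) :=
      Finset.sum_nonneg fun i _ =>
        mul_nonneg (hw_nonneg i) (by simpa using (hQ i).posSemidef.dotProduct_mulVec_nonneg (e i - y))
    rw [hexp, hySy, hys] at hnn
    linarith
end

section
/- The information-filter prediction map f(Y) = (A^{-1})^T Y A^{-1} - (A^{-1})^T Y (Y + A^T Q^{-1} A)^{-1} Y A^{-1} is monotone with respect to the Loewner order: if 0 ⪯ Y_1 ⪯ Y_2 then f(Y_1) ⪯ f(Y_2). -/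
open Matrix

/-- Conjugation of a positive definite matrix by an invertible matrix is positive definite. -/
lemma posDef_conj_of_isUnit {n : ℕ} {A B : Matrix (Fin n) (Fin n) ℝ}
    (hB : B.PosDef) (hA : IsUnit A) : (Aᴴ * B * A).PosDef := by
  refine Matrix.PosDef.of_dotProduct_mulVec_pos (Matrix.isHermitian_conjTranspose_mul_mul A hB.1) fun x hx => ?_
  have hAx : A *ᵥ x ≠ 0 :=
    (Matrix.mulVec_injective_iff_isUnit.mpr hA).ne_iff' (by simp) |>.2 hx
  have h := hB.dotProduct_mulVec_pos hAx
  rw [Matrix.mul_assoc, ← Matrix.mulVec_mulVec, Matrix.dotProduct_mulVec,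
    ← Matrix.star_mulVec, ← Matrix.mulVec_mulVec]
  exact h

/-- Loewner antitonicity of matrix inverse. -/
lemma inv_sub_inv_posSemidef {n : ℕ} {P R : Matrix (Fin n) (Fin n) ℝ}
    (hP : P.PosDef) (hR : R.PosDef) (hS : (R - P).PosSemidef) :
    (P⁻¹ - R⁻¹).PosSemidef := by
  letI := hP.isUnit.invertible
  letI := hR.isUnit.invertible
  have key : (P⁻¹ - R⁻¹) * P * (P⁻¹ - R⁻¹) + R⁻¹ * (R - P) * R⁻¹ = P⁻¹ - R⁻¹ := by
    simp only [Matrix.sub_mul, Matrix.mul_sub, Matrix.mul_assoc,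
      Matrix.mul_inv_cancel_left_of_invertible, Matrix.inv_mul_cancel_left_of_invertible,
      Matrix.mul_inv_of_invertible, Matrix.inv_mul_of_invertible, Matrix.mul_one, Matrix.one_mul]
    abel
  have hPH : (P⁻¹ - R⁻¹)ᴴ = P⁻¹ - R⁻¹ := by
    rw [conjTranspose_sub, hP.1.inv.eq, hR.1.inv.eq]
  have hRH : (R⁻¹)ᴴ = R⁻¹ := hR.1.inv.eq
  have h1 : ((P⁻¹ - R⁻¹)ᴴ * P * (P⁻¹ - R⁻¹)).PosSemidef :=
    hP.posSemidef.conjTranspose_mul_mul_same _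
  have h2 : ((R⁻¹)ᴴ * (R - P) * R⁻¹).PosSemidef :=
    hS.conjTranspose_mul_mul_same _
  rw [hPH] at h1
  rw [hRH] at h2
  have := h1.add h2
  rwa [key] at this

/-- The information-filter prediction map
`f(Y) = (A⁻¹)ᵀ Y A⁻¹ - (A⁻¹)ᵀ Y (Y + Aᵀ Q⁻¹ A)⁻¹ Y A⁻¹`
is monotone with respect to the Loewner order:
if `0 ⪯ Y₁ ⪯ Y₂` then `f(Y₁) ⪯ f(Y₂)`. -/
theorem information_prediction_monotone {n : ℕ}
    (A Q Y₁ Y₂ : Matrix (Fin n) (Fin n) ℝ)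
    (hA : IsUnit A) (hQ : Q.PosDef)
    (hY₁ : Y₁.PosSemidef) (hY₂ : Y₂.PosSemidef) (hle : (Y₂ - Y₁).PosSemidef)
    (f : Matrix (Fin n) (Fin n) ℝ → Matrix (Fin n) (Fin n) ℝ)
    (hf : f = fun Y => A⁻¹ᵀ * Y * A⁻¹ - A⁻¹ᵀ * Y * (Y + Aᵀ * Q⁻¹ * A)⁻¹ * Y * A⁻¹) :
    (f Y₂ - f Y₁).PosSemidef := by
  set M : Matrix (Fin n) (Fin n) ℝ := Aᵀ * Q⁻¹ * A with hMdef
  have hM : M.PosDef := by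
    rw [hMdef, ← Matrix.conjTranspose_eq_transpose_of_trivial]
    exact posDef_conj_of_isUnit hQ.inv hA
  have hP₁ : (Y₁ + M).PosDef := Matrix.PosDef.posSemidef_add hY₁ hM
  have hP₂ : (Y₂ + M).PosDef := Matrix.PosDef.posSemidef_add hY₂ hM
  -- key algebraic identity: Y - Y K Y = M - M K M where K = (Y+M)⁻¹
  have hg : ∀ Y : Matrix (Fin n) (Fin n) ℝ, (Y + M).PosDef →
      Y - Y * (Y + M)⁻¹ * Y = M - M * (Y + M)⁻¹ * M := by
    intro Y hYM
    letI := hYM.isUnit.invertible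
    have h1 : (Y + M) * (Y + M)⁻¹ = 1 := Matrix.mul_inv_of_invertible _
    have h2 : (Y + M)⁻¹ * (Y + M) = 1 := Matrix.inv_mul_of_invertible _
    calc Y - Y * (Y + M)⁻¹ * Y
        = ((Y + M) * (Y + M)⁻¹) * Y - Y * (Y + M)⁻¹ * Y := by rw [h1, Matrix.one_mul]
      _ = M * (Y + M)⁻¹ * Y := by noncomm_ring
      _ = M * ((Y + M)⁻¹ * (Y + M)) - M * (Y + M)⁻¹ * M := by noncomm_ring
      _ = M - M * (Y + M)⁻¹ * M := by rw [h2, Matrix.mul_one]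
  have hD : ((Y₁ + M)⁻¹ - (Y₂ + M)⁻¹).PosSemidef := by
    refine inv_sub_inv_posSemidef hP₁ hP₂ ?_
    have : Y₂ + M - (Y₁ + M) = Y₂ - Y₁ := by abel
    rw [this]; exact hle
  have hfY : ∀ Y : Matrix (Fin n) (Fin n) ℝ,
      f Y = A⁻¹ᵀ * (Y - Y * (Y + M)⁻¹ * Y) * A⁻¹ := by
    intro Y; rw [hf]; dsimp only; noncomm_ring
  have hmain : f Y₂ - f Y₁ =
      (M * A⁻¹)ᴴ * ((Y₁ + M)⁻¹ - (Y₂ + M)⁻¹) * (M * A⁻¹) := by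
    rw [hfY Y₂, hfY Y₁, hg Y₂ hP₂, hg Y₁ hP₁, Matrix.conjTranspose_mul,
      Matrix.conjTranspose_eq_transpose_of_trivial, hM.1.eq]
    noncomm_ring
  rw [hmain]
  exact hD.conjTranspose_mul_mul_same _
end

section
/- Jensen-type inequality for the inverse quadratic form: for symmetric positive definite matrices S_1,...,S_m, vectors v_1,...,v_m, and weights w_i ≥ 0 summing to 1, (∑_i w_i v_i)^T (∑_i w_i S_i)^{-1} (∑_i w_i v_i) ≤ ∑_i w_i v_i^T S_i^{-1} v_i. -/
open Matrix Finset

lemma jiqf_dot_sum {α : Type*} [Fintype α] {n : ℕ} (x : Fin n → ℝ) (f : α → Fin n → ℝ) :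
    x ⬝ᵥ ∑ i, f i = ∑ i, x ⬝ᵥ f i := by
  simp only [dotProduct, Finset.sum_apply, Finset.mul_sum]
  exact Finset.sum_comm

lemma jiqf_key {n : ℕ} {M : Matrix (Fin n) (Fin n) ℝ} (hM : M.PosDef)
    (v u : Fin n → ℝ) :
    2 * (u ⬝ᵥ v) - u ⬝ᵥ M *ᵥ u ≤ v ⬝ᵥ M⁻¹ *ᵥ v := by
  have hinv : M⁻¹.PosDef := hM.inv
  have hMI : M⁻¹ * M = 1 := nonsing_inv_mul M (isUnit_iff_ne_zero.mpr hM.det_pos.ne')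
  have hMt : Mᵀ = M := by
    rw [← conjTranspose_eq_transpose_of_trivial]; exact hM.isHermitian
  have hMit : M⁻¹ᵀ = M⁻¹ := by
    rw [← conjTranspose_eq_transpose_of_trivial]; exact hinv.isHermitian
  set d := v - M *ᵥ u with hd
  have h0 : (0:ℝ) ≤ d ⬝ᵥ M⁻¹ *ᵥ d := by
    simpa using hinv.posSemidef.dotProduct_mulVec_nonneg d
  have hsymm : ∀ a b : Fin n → ℝ, a ⬝ᵥ M⁻¹ *ᵥ b = b ⬝ᵥ M⁻¹ *ᵥ a := fun a b => by
    rw [dotProduct_mulVec, ← mulVec_transpose, hMit, dotProduct_comm]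
  have hMu : M⁻¹ *ᵥ (M *ᵥ u) = u := by
    rw [mulVec_mulVec, hMI, one_mulVec]
  have hcomm : M *ᵥ u ⬝ᵥ u = u ⬝ᵥ M *ᵥ u := by
    rw [dotProduct_mulVec, ← mulVec_transpose, hMt, dotProduct_comm]
  have hexp : d ⬝ᵥ M⁻¹ *ᵥ d = v ⬝ᵥ M⁻¹ *ᵥ v - 2 * (u ⬝ᵥ v) + u ⬝ᵥ M *ᵥ u := by
    rw [hd, sub_dotProduct, mulVec_sub, dotProduct_sub, dotProduct_sub, hMu,
      hsymm (M *ᵥ u) v, hMu, hcomm, dotProduct_comm v u]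
    ring
  linarith

/-- Jensen-type inequality for the inverse quadratic form: for
symmetric positive definite `Sᵢ`, vectors `vᵢ`, and weights `wᵢ ≥ 0` summing to 1,
`(∑ wᵢ vᵢ)ᵀ (∑ wᵢ Sᵢ)⁻¹ (∑ wᵢ vᵢ) ≤ ∑ wᵢ vᵢᵀ Sᵢ⁻¹ vᵢ`. -/
theorem jensen_inverse_quadratic_form {n m : ℕ}
    (S : Fin m → Matrix (Fin n) (Fin n) ℝ) (hS : ∀ i, (S i).PosDef)
    (v : Fin m → Fin n → ℝ)
    (w : Fin m → ℝ) (hw_nonneg : ∀ i, 0 ≤ w i) (hw_sum : ∑ i, w i = 1) :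
    (∑ i, w i • v i) ⬝ᵥ (∑ i, w i • S i)⁻¹ *ᵥ (∑ i, w i • v i) ≤
      ∑ i, w i * (v i ⬝ᵥ (S i)⁻¹ *ᵥ v i) := by
  set T := ∑ i, w i • S i with hT
  set z := ∑ i, w i • v i with hz
  have hTmv : ∀ x, T *ᵥ x = ∑ i, w i • (S i *ᵥ x) := fun x => by
    rw [hT, show (∑ i, w i • S i) *ᵥ x = ∑ i, (w i • S i) *ᵥ x from
      map_sum (mulVec.addMonoidHomLeft x) _ _]
    exact Finset.sum_congr rfl fun i _ => smul_mulVec _ _ _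
  have hdotq : ∀ x, x ⬝ᵥ T *ᵥ x = ∑ i, w i * (x ⬝ᵥ S i *ᵥ x) := fun x => by
    rw [hTmv, jiqf_dot_sum]
    exact Finset.sum_congr rfl fun i _ => by rw [dotProduct_smul, smul_eq_mul]
  have hTpos : T.PosDef := by
    refine PosDef.of_dotProduct_mulVec_pos ?_ ?_
    · rw [IsHermitian, conjTranspose_eq_transpose_of_trivial, hT, Matrix.transpose_sum]
      refine Finset.sum_congr rfl fun i _ => ?_
      rw [Matrix.transpose_smul, ← conjTranspose_eq_transpose_of_trivial, (hS i).isHermitian]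
    · intro x hx
      rw [star_trivial, hdotq]
      obtain ⟨i0, -, hi0⟩ : ∃ i ∈ Finset.univ, 0 < w i := by
        by_contra h
        push_neg at h
        have : ∑ i, w i ≤ 0 := Finset.sum_nonpos fun i hi => h i hi
        linarith [hw_sum]
      refine Finset.sum_pos' (fun i _ => mul_nonneg (hw_nonneg i) ?_) ⟨i0, Finset.mem_univ i0, ?_⟩
      · have := (hS i).posSemidef.dotProduct_mulVec_nonneg x; simpa using this
      · exact mul_pos hi0 (by simpa using (hS i0).dotProduct_mulVec_pos hx)
  have hTU : IsUnit T.det := isUnit_iff_ne_zero.mpr hTpos.det_pos.ne'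
  set u := T⁻¹ *ᵥ z with hu
  have hTu : T *ᵥ u = z := by
    rw [hu, mulVec_mulVec, mul_nonsing_inv T hTU, one_mulVec]
  have huz : u ⬝ᵥ z = ∑ i, w i * (u ⬝ᵥ v i) := by
    rw [hz, jiqf_dot_sum]
    exact Finset.sum_congr rfl fun i _ => by rw [dotProduct_smul, smul_eq_mul]
  have hsum : ∑ i, w i * (2 * (u ⬝ᵥ v i) - u ⬝ᵥ S i *ᵥ u) = z ⬝ᵥ T⁻¹ *ᵥ z := by
    have h1 : ∑ i, w i * (2 * (u ⬝ᵥ v i) - u ⬝ᵥ S i *ᵥ u)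
        = 2 * (u ⬝ᵥ z) - u ⬝ᵥ T *ᵥ u := by
      rw [huz, hdotq, Finset.mul_sum, ← Finset.sum_sub_distrib]
      exact Finset.sum_congr rfl fun i _ => by ring
    rw [h1, hTu, ← hu, dotProduct_comm]
    ring
  calc z ⬝ᵥ T⁻¹ *ᵥ z = ∑ i, w i * (2 * (u ⬝ᵥ v i) - u ⬝ᵥ S i *ᵥ u) := hsum.symm
    _ ≤ ∑ i, w i * (v i ⬝ᵥ (S i)⁻¹ *ᵥ v i) :=
      Finset.sum_le_sum fun i _ =>
        mul_le_mul_of_nonneg_left (jiqf_key (hS i) (v i) u) (hw_nonneg i)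
end
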